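/- arXiv:1303.6617 — 3 statements merged into one kernel-verified Lean document; each statement's English description precedes it below -/
import Mathlib

section
/- Under the scaling π_{k,N}^± = (T/N)·φ_±(kT/N), the Riemann sum Σ_{k=0}^{N-1} π_{k,N}^⁺·A_{k+1}^N converges as N → ∞ to ∫₀ᵀ φ₊(s)·exp(-∫ₛᵀ(φ₋+φ₊)(u)du)ds. -/
open Finset Real Filter

lemma aux_one_sub_exp {x : ℝ} (hx : 0 ≤ x) : |1 - x - Real.exp (-x)| ≤ x ^ 2 := by
  have h1 : 1 - x ≤ Real.exp (-x) := by have := Real.add_one_le_exp (-x); linarith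
  have hx1 : (0:ℝ) < 1 + x := by linarith
  have h2 : Real.exp (-x) ≤ 1 / (1 + x) := by
    rw [Real.exp_neg, inv_eq_one_div]
    exact one_div_le_one_div_of_le hx1 (by have := Real.add_one_le_exp x; linarith)
  have h3 : 1 / (1 + x) ≤ 1 - x + x ^ 2 := by
    rw [div_le_iff₀ hx1]; nlinarith
  have h4 : Real.exp (-x) ≤ 1 - x + x ^ 2 := h2.trans h3
  rw [abs_le]; constructor <;> nlinarith

lemma aux_exp_lip_aux {a b : ℝ} (ha : 0 ≤ a) (hab : a ≤ b) :
    Real.exp (-a) - Real.exp (-b) ≤ b - a := by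
  have h1 : Real.exp (-b) = Real.exp (-a) * Real.exp (a - b) := by
    rw [← Real.exp_add]; ring_nf
  have h2 : 1 - (b - a) ≤ Real.exp (a - b) := by
    have := Real.add_one_le_exp (a - b); linarith
  have h3 : Real.exp (-a) ≤ 1 := Real.exp_le_one_iff.mpr (by linarith)
  have h4 : 0 ≤ Real.exp (-a) := (Real.exp_pos _).le
  nlinarith

lemma aux_exp_lip {a b : ℝ} (ha : 0 ≤ a) (hb : 0 ≤ b) :
    |Real.exp (-a) - Real.exp (-b)| ≤ |a - b| := by
  rcases le_total a b with h | h
  · have h1 := aux_exp_lip_aux ha h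
    have h2 : Real.exp (-a) - Real.exp (-b) ≥ 0 := by
      have := Real.exp_le_exp.mpr (neg_le_neg h); linarith
    rw [abs_of_nonneg h2, abs_of_nonpos (by linarith)]; linarith
  · have h1 := aux_exp_lip_aux hb h
    have h2 : Real.exp (-b) - Real.exp (-a) ≥ 0 := by
      have := Real.exp_le_exp.mpr (neg_le_neg h); linarith
    rw [abs_sub_comm, abs_of_nonneg h2, abs_of_nonneg (by linarith)]; linarith

lemma aux_prod_exp (s : Finset ℕ) (x : ℕ → ℝ) (h0 : ∀ i ∈ s, 0 ≤ x i)
    (h1 : ∀ i ∈ s, x i ≤ 1) :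
    |(∏ i ∈ s, (1 - x i)) - Real.exp (-∑ i ∈ s, x i)| ≤ ∑ i ∈ s, x i ^ 2 := by
  classical
  induction s using Finset.induction_on with
  | empty => simp
  | @insert a s ha ih =>
    have h0' : ∀ i ∈ s, 0 ≤ x i := fun i hi => h0 i (Finset.mem_insert_of_mem hi)
    have h1' : ∀ i ∈ s, x i ≤ 1 := fun i hi => h1 i (Finset.mem_insert_of_mem hi)
    have hxa0 : 0 ≤ x a := h0 a (Finset.mem_insert_self a s)
    have hxa1 : x a ≤ 1 := h1 a (Finset.mem_insert_self a s)
    have hE0 : 0 ≤ Real.exp (-∑ i ∈ s, x i) := (Real.exp_pos _).le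
    have hE1 : Real.exp (-∑ i ∈ s, x i) ≤ 1 :=
      Real.exp_le_one_iff.mpr (neg_nonpos.mpr (Finset.sum_nonneg h0'))
    rw [Finset.prod_insert ha, Finset.sum_insert ha, Finset.sum_insert ha,
      neg_add, Real.exp_add]
    set P := ∏ i ∈ s, (1 - x i)
    set E := Real.exp (-∑ i ∈ s, x i)
    have key : (1 - x a) * P - Real.exp (-x a) * E
        = (1 - x a) * (P - E) + ((1 - x a) - Real.exp (-x a)) * E := by ring
    rw [key]
    have ih' := ih h0' h1'
    calc |(1 - x a) * (P - E) + ((1 - x a) - Real.exp (-x a)) * E|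
        ≤ |(1 - x a) * (P - E)| + |((1 - x a) - Real.exp (-x a)) * E| := abs_add_le _ _
      _ ≤ 1 * |P - E| + x a ^ 2 * 1 := by
          rw [abs_mul, abs_mul]
          gcongr
          · rw [abs_of_nonneg (by linarith)]; linarith
          · exact aux_one_sub_exp hxa0
          · rw [abs_of_nonneg hE0]; exact hE1
      _ ≤ x a ^ 2 + ∑ i ∈ s, x i ^ 2 := by rw [one_mul, mul_one]; linarith

lemma aux_int_pt {f : ℝ → ℝ} (hf : Continuous f) {T a b δ ε : ℝ} (hab : a ≤ b)
    (ha : a ∈ Set.Icc (0:ℝ) T) (hb : b ∈ Set.Icc (0:ℝ) T) (hδ : b - a < δ)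
    (huc : ∀ x ∈ Set.Icc (0:ℝ) T, ∀ y ∈ Set.Icc (0:ℝ) T,
      dist x y < δ → dist (f x) (f y) < ε) :
    |(b - a) * f a - ∫ x in a..b, f x| ≤ ε * (b - a) := by
  have hconst : (b - a) * f a = ∫ _x in a..b, f a := by
    rw [intervalIntegral.integral_const, smul_eq_mul]
  rw [hconst, ← intervalIntegral.integral_sub (intervalIntegrable_const)
    (hf.intervalIntegrable a b)]
  have hb1 : |b - a| = b - a := abs_of_nonneg (by linarith)
  calc |∫ x in a..b, (f a - f x)| ≤ ε * |b - a| := by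
        rw [← Real.norm_eq_abs]
        apply intervalIntegral.norm_integral_le_of_norm_le_const
        intro x hx
        rw [Set.uIoc_of_le hab] at hx
        rw [Real.norm_eq_abs]
        have hx1 : x ∈ Set.Icc (0:ℝ) T := ⟨le_trans ha.1 hx.1.le, le_trans hx.2 hb.2⟩
        have hd : dist a x < δ := by
          rw [Real.dist_eq, abs_of_nonpos (by linarith [hx.1.le])]
          linarith [hx.1, hx.2]
        exact le_of_lt (huc a ha x hx1 hd)
    _ = ε * (b - a) := by rw [hb1]
set_option maxHeartbeats 1000000 in
/-- convergence of the Riemann sums `Σ π⁺_{k,N} A^N_{k+1}` towards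
`I(φ₊) = ∫₀ᵀ φ₊(s) e^{-∫ₛᵀ(φ₋+φ₊)} ds`. Here `A^N_{k+1}` for `k = N-1` is the
empty product `1`, matching `A_N^N = 1`. -/
theorem stmt9 (T : ℝ) (hT : 0 < T) (φm φp : ℝ → ℝ)
    (hφm : Continuous φm) (hφp : Continuous φp)
    (hφmper : ∀ t, φm (t + T) = φm t) (hφpper : ∀ t, φp (t + T) = φp t)
    (hφmpos : ∀ t, 0 < φm t) (hφppos : ∀ t, 0 < φp t) :
    Tendsto
      (fun (N : ℕ) => ∑ k ∈ Finset.range N,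
        (T / N) * φp (k * T / N) *
          ∏ j ∈ Finset.Ico (k + 1) N, (1 - (T / N) * (φm (j * T / N) + φp (j * T / N))))
      atTop
      (nhds (∫ s in (0:ℝ)..T, φp s * Real.exp (-∫ u in s..T, (φm u + φp u)))) := by
  have hψ : Continuous (fun u => φm u + φp u) := hφm.add hφp
  have hψnn : ∀ t, 0 ≤ φm t + φp t := fun t => by
    have h1 := (hφmpos t).le; have h2 := (hφppos t).le; linarith
  have hψint : ∀ a b : ℝ, IntervalIntegrable (fun u => φm u + φp u) MeasureTheory.volume a b :=
    fun a b => hψ.intervalIntegrable a b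
  -- bounds on compact [0,T]
  obtain ⟨M₀, hM₀⟩ := (isCompact_Icc (a := (0:ℝ)) (b := T)).exists_bound_of_continuousOn
    hψ.continuousOn
  obtain ⟨Mp₀, hMp₀⟩ := (isCompact_Icc (a := (0:ℝ)) (b := T)).exists_bound_of_continuousOn
    hφp.continuousOn
  set M : ℝ := max M₀ 1 with hMdef
  set Mp : ℝ := max Mp₀ 1 with hMpdef
  have hM1 : (1:ℝ) ≤ M := le_max_right _ _
  have hMp1 : (1:ℝ) ≤ Mp := le_max_right _ _
  have hMpos : (0:ℝ) < M := lt_of_lt_of_le one_pos hM1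
  have hMppos : (0:ℝ) < Mp := lt_of_lt_of_le one_pos hMp1
  have hMψ : ∀ t ∈ Set.Icc (0:ℝ) T, φm t + φp t ≤ M := fun t ht =>
    le_trans (le_trans (le_abs_self _) (by simpa [Real.norm_eq_abs] using hM₀ t ht))
      (le_max_left _ _)
  have hMφp : ∀ t ∈ Set.Icc (0:ℝ) T, φp t ≤ Mp := fun t ht =>
    le_trans (le_trans (le_abs_self _) (by simpa [Real.norm_eq_abs] using hMp₀ t ht))
      (le_max_left _ _)
  -- the limit integrand and its continuity
  set h : ℝ → ℝ := fun s => φp s * Real.exp (-∫ u in s..T, (φm u + φp u)) with hhdef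
  have hIeq : (fun s => ∫ u in s..T, (φm u + φp u))
      = fun s => (∫ u in (0:ℝ)..T, (φm u + φp u)) - ∫ u in (0:ℝ)..s, (φm u + φp u) := by
    funext s
    have := intervalIntegral.integral_add_adjacent_intervals (hψint 0 s) (hψint s T)
    linarith
  have hconth : Continuous h := by
    apply hφp.mul
    apply Real.continuous_exp.comp
    apply Continuous.neg
    rw [hIeq]
    exact continuous_const.sub (intervalIntegral.continuous_primitive hψint 0)
  -- uniform continuity on [0,T]
  have hucψ := Metric.uniformContinuousOn_iff.mp
    ((isCompact_Icc (a := (0:ℝ)) (b := T)).uniformContinuousOn_of_continuous hψ.continuousOn)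
  have huch := Metric.uniformContinuousOn_iff.mp
    ((isCompact_Icc (a := (0:ℝ)) (b := T)).uniformContinuousOn_of_continuous hconth.continuousOn)
  rw [Metric.tendsto_atTop]
  intro ε hε
  set εψ : ℝ := ε / (3 * (T * Mp * T + 1)) with hεψdef
  have hεψpos : 0 < εψ := by
    apply div_pos hε
    have : 0 < T * Mp * T := by positivity
    linarith
  set εh : ℝ := ε / (3 * (T + 1)) with hεhdef
  have hεhpos : 0 < εh := by
    apply div_pos hε; linarith
  obtain ⟨δψ, hδψpos, hδψ⟩ := hucψ εψ hεψpos
  obtain ⟨δh, hδhpos, hδh⟩ := huch εh hεhpos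
  obtain ⟨N₀, hN₀⟩ := exists_nat_gt (max (max (T / δψ) (T / δh))
    (max (T * M) (3 * (T * Mp * (T ^ 2 * M ^ 2 + T * M)) / ε)))
  refine ⟨N₀ + 1, fun N hN => ?_⟩
  have hN1 : 1 ≤ N := le_trans (by omega) hN
  have hNR : (0:ℝ) < N := by exact_mod_cast Nat.pos_of_ne_zero (by omega)
  have hNge : (N₀ : ℝ) < N := by exact_mod_cast Nat.lt_of_lt_of_le (Nat.lt_succ_self N₀) hN
  have hmeshψ : T / N < δψ := by
    rw [div_lt_iff₀ hNR]
    have h1 : T / δψ < N := lt_trans (lt_of_le_of_lt (le_trans (le_max_left _ _)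
      (le_max_left _ _)) hN₀) hNge
    rw [div_lt_iff₀ hδψpos] at h1; linarith
  have hmeshh : T / N < δh := by
    rw [div_lt_iff₀ hNR]
    have h1 : T / δh < N := lt_trans (lt_of_le_of_lt (le_trans (le_max_right _ _)
      (le_max_left _ _)) hN₀) hNge
    rw [div_lt_iff₀ hδhpos] at h1; linarith
  have hTM_N : T * M < N := lt_trans (lt_of_le_of_lt (le_trans (le_max_left _ _)
    (le_max_right _ _)) hN₀) hNge
  have hbig : 3 * (T * Mp * (T ^ 2 * M ^ 2 + T * M)) / ε < N :=
    lt_trans (lt_of_le_of_lt (le_trans (le_max_right _ _) (le_max_right _ _)) hN₀) hNge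
  -- grid points
  have hpt : ∀ j : ℕ, j ≤ N → (j : ℝ) * T / N ∈ Set.Icc (0:ℝ) T := by
    intro j hj
    constructor
    · exact div_nonneg (mul_nonneg (Nat.cast_nonneg j) hT.le) hNR.le
    · rw [div_le_iff₀ hNR]
      have : (j : ℝ) ≤ N := by exact_mod_cast hj
      nlinarith
  have hstep : ∀ j : ℕ, ((j:ℝ) + 1) * T / N - (j : ℝ) * T / N = T / N := by
    intro j; ring
  have hTNpos : 0 < T / N := div_pos hT hNR
  set ε₁ : ℝ := T ^ 2 * M ^ 2 / N + T * εψ + T * M / N with hε₁def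
  -- the per-k bound
  have key : ∀ k ∈ Finset.range N,
      |(T / N) * φp ((k : ℝ) * T / N) *
          (∏ j ∈ Finset.Ico (k + 1) N, (1 - (T / N) * (φm ((j:ℝ) * T / N) + φp ((j:ℝ) * T / N))))
        - ∫ s in ((k:ℝ) * T / N)..(((k:ℝ) + 1) * T / N), h s|
      ≤ (T / N) * (Mp * ε₁ + εh) := by
    intro k hk
    have hkN : k < N := Finset.mem_range.mp hk
    have hak : (k:ℝ) * T / N ∈ Set.Icc (0:ℝ) T := hpt k hkN.le
    have hak1 : ((k:ℝ) + 1) * T / N ∈ Set.Icc (0:ℝ) T := by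
      have := hpt (k+1) hkN
      push_cast at this
      exact this
    have hle : (k:ℝ) * T / N ≤ ((k:ℝ) + 1) * T / N := by
      have := hstep k; linarith
    set P : ℝ := ∏ j ∈ Finset.Ico (k + 1) N,
      (1 - T / N * (φm ((j:ℝ) * T / N) + φp ((j:ℝ) * T / N))) with hPdef
    set R : ℝ := ∑ j ∈ Finset.Ico (k + 1) N,
      T / N * (φm ((j:ℝ) * T / N) + φp ((j:ℝ) * T / N)) with hRdef
    set J1 : ℝ := ∫ u in (((k:ℝ) + 1) * T / N)..T, (φm u + φp u) with hJ1def
    set J0 : ℝ := ∫ u in ((k:ℝ) * T / N)..T, (φm u + φp u) with hJ0def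
    have hx0 : ∀ j ∈ Finset.Ico (k+1) N,
        0 ≤ T / N * (φm ((j:ℝ) * T / N) + φp ((j:ℝ) * T / N)) :=
      fun j _ => mul_nonneg hTNpos.le (hψnn _)
    have hxub : ∀ j ∈ Finset.Ico (k+1) N,
        T / N * (φm ((j:ℝ) * T / N) + φp ((j:ℝ) * T / N)) ≤ T * M / N := by
      intro j hj
      have hjN : j < N := (Finset.mem_Ico.mp hj).2
      have h1 := hMψ _ (hpt j hjN.le)
      calc T / N * (φm ((j:ℝ) * T / N) + φp ((j:ℝ) * T / N)) ≤ T / N * M :=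
            mul_le_mul_of_nonneg_left h1 hTNpos.le
        _ = T * M / N := by ring
    have hTMN1 : T * M / N ≤ 1 := le_of_lt ((div_lt_one hNR).mpr hTM_N)
    have hx1 : ∀ j ∈ Finset.Ico (k+1) N,
        T / N * (φm ((j:ℝ) * T / N) + φp ((j:ℝ) * T / N)) ≤ 1 :=
      fun j hj => le_trans (hxub j hj) hTMN1
    have hcard : ((Finset.Ico (k+1) N).card : ℝ) ≤ N := by
      rw [Nat.card_Ico]
      exact_mod_cast Nat.sub_le N (k+1)
    -- step (i): product vs exponential of Riemann sum
    have hi : |P - Real.exp (-R)| ≤ T ^ 2 * M ^ 2 / N := by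
      rw [hPdef, hRdef]
      refine le_trans (aux_prod_exp _ _ hx0 hx1) ?_
      calc ∑ j ∈ Finset.Ico (k+1) N,
            (T / N * (φm ((j:ℝ) * T / N) + φp ((j:ℝ) * T / N))) ^ 2
          ≤ (Finset.Ico (k+1) N).card • ((T * M / N) ^ 2) := by
            apply Finset.sum_le_card_nsmul
            intro j hj
            exact pow_le_pow_left₀ (hx0 j hj) (hxub j hj) 2
        _ = ((Finset.Ico (k+1) N).card : ℝ) * (T * M / N) ^ 2 := by simp [nsmul_eq_mul]
        _ ≤ (N : ℝ) * (T * M / N) ^ 2 :=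
            mul_le_mul_of_nonneg_right hcard (by positivity)
        _ = T ^ 2 * M ^ 2 / N := by field_simp
    -- step (ii): Riemann sum of ψ vs its integral
    have hRsum : ∑ j ∈ Finset.Ico (k+1) N,
        (∫ u in ((j:ℝ) * T / N)..(((j:ℝ) + 1) * T / N), (φm u + φp u)) = J1 := by
      rw [hJ1def]
      have h1 := intervalIntegral.sum_integral_adjacent_intervals_Ico
        (a := fun j : ℕ => (j:ℝ) * T / N) (m := k+1) (n := N)
        (f := fun u => φm u + φp u) (μ := MeasureTheory.volume) hkN
        (fun j _ => hψint _ _)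
      push_cast at h1
      rwa [show (N:ℝ) * T / N = T by field_simp] at h1
    have hRerr : |R - J1| ≤ T * εψ := by
      rw [hRdef, ← hRsum, ← Finset.sum_sub_distrib]
      refine le_trans (Finset.abs_sum_le_sum_abs _ _) ?_
      calc ∑ j ∈ Finset.Ico (k+1) N,
            |T / N * (φm ((j:ℝ) * T / N) + φp ((j:ℝ) * T / N))
              - ∫ u in ((j:ℝ) * T / N)..(((j:ℝ) + 1) * T / N), (φm u + φp u)|
          ≤ (Finset.Ico (k+1) N).card • (εψ * (T / N)) := by
            apply Finset.sum_le_card_nsmul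
            intro j hj
            have hjN : j < N := (Finset.mem_Ico.mp hj).2
            have hj1 : ((j:ℝ) + 1) * T / N ∈ Set.Icc (0:ℝ) T := by
              have := hpt (j+1) hjN; push_cast at this; exact this
            have hjle : (j:ℝ) * T / N ≤ ((j:ℝ) + 1) * T / N := by
              have := hstep j; linarith
            have haux := aux_int_pt hψ hjle (hpt j hjN.le) hj1
              (by rw [hstep j]; exact hmeshψ) hδψ
            rw [hstep j] at haux
            exact haux
        _ = ((Finset.Ico (k+1) N).card : ℝ) * (εψ * (T / N)) := by simp [nsmul_eq_mul]
        _ ≤ (N : ℝ) * (εψ * (T / N)) :=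
            mul_le_mul_of_nonneg_right hcard (by positivity)
        _ = T * εψ := by field_simp
    have hR0 : 0 ≤ R := Finset.sum_nonneg hx0
    have hJ1nn : 0 ≤ J1 :=
      intervalIntegral.integral_nonneg hak1.2 (fun u _ => hψnn u)
    have hJ0nn : 0 ≤ J0 :=
      intervalIntegral.integral_nonneg hak.2 (fun u _ => hψnn u)
    have hii : |Real.exp (-R) - Real.exp (-J1)| ≤ T * εψ :=
      le_trans (aux_exp_lip hR0 hJ1nn) hRerr
    -- step (iii)
    have hadd := intervalIntegral.integral_add_adjacent_intervals
      (hψint ((k:ℝ) * T / N) (((k:ℝ) + 1) * T / N)) (hψint (((k:ℝ) + 1) * T / N) T)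
    have hmid : |∫ u in ((k:ℝ) * T / N)..(((k:ℝ) + 1) * T / N), (φm u + φp u)| ≤ M * (T / N) := by
      rw [← Real.norm_eq_abs]
      refine le_trans (intervalIntegral.norm_integral_le_of_norm_le_const (C := M) ?_) ?_
      · intro u hu
        rw [Set.uIoc_of_le hle] at hu
        have hu1 : u ∈ Set.Icc (0:ℝ) T := ⟨le_trans hak.1 hu.1.le, le_trans hu.2 hak1.2⟩
        rw [Real.norm_eq_abs, abs_of_nonneg (hψnn u)]
        exact hMψ u hu1
      · rw [hstep k, abs_of_pos hTNpos]
    have hiii : |Real.exp (-J1) - Real.exp (-J0)| ≤ M * (T / N) := by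
      refine le_trans (aux_exp_lip hJ1nn hJ0nn) ?_
      have hdd : J1 - J0 = -(∫ u in ((k:ℝ) * T / N)..(((k:ℝ) + 1) * T / N), (φm u + φp u)) := by
        rw [hJ1def, hJ0def] at *
        linarith [hadd]
      rw [hdd, abs_neg]
      exact hmid
    have hPE : |P - Real.exp (-J0)| ≤ ε₁ := by
      have t1 := abs_sub_le P (Real.exp (-R)) (Real.exp (-J0))
      have t2 := abs_sub_le (Real.exp (-R)) (Real.exp (-J1)) (Real.exp (-J0))
      have t3 : M * (T / N) = T * M / N := by ring
      rw [hε₁def]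
      linarith
    -- final per-k assembly
    have hφpk0 : 0 ≤ φp ((k:ℝ) * T / N) := (hφppos _).le
    have hφpkM : φp ((k:ℝ) * T / N) ≤ Mp := hMφp _ hak
    have hterm1 : |T / N * φp ((k:ℝ) * T / N) * P
        - T / N * φp ((k:ℝ) * T / N) * Real.exp (-J0)| ≤ T / N * (Mp * ε₁) := by
      rw [← mul_sub, abs_mul, abs_of_nonneg (mul_nonneg hTNpos.le hφpk0)]
      calc T / N * φp ((k:ℝ) * T / N) * |P - Real.exp (-J0)| ≤ (T / N * Mp) * ε₁ := by
            apply mul_le_mul (mul_le_mul_of_nonneg_left hφpkM hTNpos.le) hPE (abs_nonneg _)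
            positivity
        _ = T / N * (Mp * ε₁) := by ring
    have hterm2 : |T / N * φp ((k:ℝ) * T / N) * Real.exp (-J0)
        - ∫ s in ((k:ℝ) * T / N)..(((k:ℝ) + 1) * T / N), h s| ≤ εh * (T / N) := by
      have haux := aux_int_pt hconth hle hak hak1 (by rw [hstep k]; exact hmeshh) hδh
      rw [hstep k] at haux
      have heq : T / N * h ((k:ℝ) * T / N)
          = T / N * φp ((k:ℝ) * T / N) * Real.exp (-J0) := by
        simp only [hhdef, hJ0def]
        ring
      rw [heq] at haux
      exact haux
    calc |T / N * φp ((k:ℝ) * T / N) * P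
        - ∫ s in ((k:ℝ) * T / N)..(((k:ℝ) + 1) * T / N), h s|
        ≤ |T / N * φp ((k:ℝ) * T / N) * P - T / N * φp ((k:ℝ) * T / N) * Real.exp (-J0)|
          + |T / N * φp ((k:ℝ) * T / N) * Real.exp (-J0)
            - ∫ s in ((k:ℝ) * T / N)..(((k:ℝ) + 1) * T / N), h s| := abs_sub_le _ _ _
      _ ≤ T / N * (Mp * ε₁) + εh * (T / N) := add_le_add hterm1 hterm2
      _ = T / N * (Mp * ε₁ + εh) := by ring
  -- split the integral along the grid
  have hsplit : (∫ s in (0:ℝ)..T, h s)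
      = ∑ k ∈ Finset.range N, ∫ s in ((k:ℝ) * T / N)..(((k:ℝ) + 1) * T / N), h s := by
    have h1 := intervalIntegral.sum_integral_adjacent_intervals
      (a := fun k : ℕ => (k : ℝ) * T / N) (n := N) (f := h) (μ := MeasureTheory.volume)
      (fun k _ => hconth.intervalIntegrable _ _)
    push_cast at h1
    rw [show ((0:ℝ) * T / N) = 0 by ring, show (N:ℝ) * T / N = T by field_simp] at h1
    exact h1.symm
  rw [Real.dist_eq, hsplit]
  have hdiff : (∑ k ∈ Finset.range N,
        (T / N) * φp ((k:ℝ) * T / N) *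
          ∏ j ∈ Finset.Ico (k + 1) N, (1 - (T / N) * (φm ((j:ℝ) * T / N) + φp ((j:ℝ) * T / N))))
      - ∑ k ∈ Finset.range N, ∫ s in ((k:ℝ) * T / N)..(((k:ℝ) + 1) * T / N), h s
      = ∑ k ∈ Finset.range N,
        ((T / N) * φp ((k:ℝ) * T / N) *
          (∏ j ∈ Finset.Ico (k + 1) N, (1 - (T / N) * (φm ((j:ℝ) * T / N) + φp ((j:ℝ) * T / N))))
        - ∫ s in ((k:ℝ) * T / N)..(((k:ℝ) + 1) * T / N), h s) := by
    rw [Finset.sum_sub_distrib]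
  calc |(∑ k ∈ Finset.range N,
        (T / N) * φp ((k:ℝ) * T / N) *
          ∏ j ∈ Finset.Ico (k + 1) N, (1 - (T / N) * (φm ((j:ℝ) * T / N) + φp ((j:ℝ) * T / N))))
      - ∑ k ∈ Finset.range N, ∫ s in ((k:ℝ) * T / N)..(((k:ℝ) + 1) * T / N), h s|
      = |∑ k ∈ Finset.range N,
        ((T / N) * φp ((k:ℝ) * T / N) *
          (∏ j ∈ Finset.Ico (k + 1) N, (1 - (T / N) * (φm ((j:ℝ) * T / N) + φp ((j:ℝ) * T / N))))
        - ∫ s in ((k:ℝ) * T / N)..(((k:ℝ) + 1) * T / N), h s)| := by rw [hdiff]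
    _ ≤ ∑ k ∈ Finset.range N,
        |(T / N) * φp ((k:ℝ) * T / N) *
          (∏ j ∈ Finset.Ico (k + 1) N, (1 - (T / N) * (φm ((j:ℝ) * T / N) + φp ((j:ℝ) * T / N))))
        - ∫ s in ((k:ℝ) * T / N)..(((k:ℝ) + 1) * T / N), h s| := Finset.abs_sum_le_sum_abs _ _
    _ ≤ (Finset.range N).card • ((T / N) * (Mp * ε₁ + εh)) := Finset.sum_le_card_nsmul _ _ _ key
    _ = (N : ℝ) * ((T / N) * (Mp * ε₁ + εh)) := by
        rw [Finset.card_range]; simp [nsmul_eq_mul]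
    _ = T * Mp * ε₁ + T * εh := by field_simp
    _ < ε := by
      have hX : 3 * (T * Mp * (T ^ 2 * M ^ 2 + T * M)) < N * ε := (div_lt_iff₀ hε).mp hbig
      have e1 : T * Mp * (T ^ 2 * M ^ 2 / N + T * M / N) < ε / 3 := by
        have heq : T * Mp * (T ^ 2 * M ^ 2 / N + T * M / N)
            = (T * Mp * (T ^ 2 * M ^ 2 + T * M)) / N := by field_simp; try ring
        rw [heq, div_lt_div_iff₀ hNR (by norm_num : (0:ℝ) < 3)]
        linarith
      have e2 : T * Mp * (T * εψ) < ε / 3 := by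
        have heq : T * Mp * (T * εψ) = (T * Mp * T) * ε / (3 * (T * Mp * T + 1)) := by
          rw [hεψdef]; ring
        rw [heq, div_lt_div_iff₀ (by positivity) (by norm_num : (0:ℝ) < 3)]
        nlinarith [mul_pos (mul_pos hT hMppos) hT]
      have e3 : T * εh < ε / 3 := by
        have heq : T * εh = T * ε / (3 * (T + 1)) := by rw [hεhdef]; ring
        rw [heq, div_lt_div_iff₀ (by positivity) (by norm_num : (0:ℝ) < 3)]
        nlinarith
      have expand : T * Mp * ε₁ + T * εh
          = T * Mp * (T ^ 2 * M ^ 2 / N + T * M / N) + T * Mp * (T * εψ) + T * εh := by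
        rw [hε₁def]; ring
      rw [expand]
      linarith
end

section
/- Let φ₀, φ₁ > 0 and T > 0, with φ₋(t) = φ₀ on [0,T/2) and φ₁ on [T/2,T), and φ₊(t) = φ₀+φ₁-φ₋(t), extended T-periodically. Then the unique T-periodic solution of μ₋' = -φ₋μ₋ + φ₊(1-μ₋) is μ₋(t) = [e^{-(φ₀+φ₁)t}/(1+e^{-(φ₀+φ₁)T/2})]·(φ₀-φ₁)/(φ₀+φ₁) + φ₁/(φ₀+φ₁) for t ∈ [0,T/2), and it satisfies μ₋(t+T/2) = 1-μ₋(t). -/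
open Real

lemma constOn {f : ℝ → ℝ} {u v : ℝ} (hc : ContinuousOn f (Set.Icc u v))
    (hd : ∀ t ∈ Set.Ioo u v, HasDerivAt f 0 t) : ∀ t ∈ Set.Icc u v, f t = f u := by
  intro t ht
  have hu : u ∈ Set.Icc u v := ⟨le_refl u, ht.1.trans ht.2⟩
  have hmono : MonotoneOn f (Set.Icc u v) := by
    apply monotoneOn_of_deriv_nonneg (convex_Icc u v) hc
    · intro x hx
      rw [interior_Icc] at hx
      exact (hd x hx).differentiableAt.differentiableWithinAt
    · intro x hx
      rw [interior_Icc] at hx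
      rw [(hd x hx).deriv]
  have hanti : MonotoneOn (fun t => -f t) (Set.Icc u v) := by
    apply monotoneOn_of_deriv_nonneg (convex_Icc u v) hc.neg
    · intro x hx
      rw [interior_Icc] at hx
      exact ((hd x hx).neg).differentiableAt.differentiableWithinAt
    · intro x hx
      rw [interior_Icc] at hx
      rw [((hd x hx).neg).deriv]
      simp
  have h1 := hmono hu ht ht.1
  have h2 := hanti hu ht ht.1
  simp at h2
  linarith

lemma expConst {g : ℝ → ℝ} {s u v : ℝ} (hg : Continuous g)
    (hode : ∀ t ∈ Set.Ioo u v, HasDerivAt g (-s * g t) t) :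
    ∀ t ∈ Set.Icc u v, g t * Real.exp (s * t) = g u * Real.exp (s * u) := by
  have hF : ∀ t ∈ Set.Ioo u v, HasDerivAt (fun t => g t * Real.exp (s * t)) 0 t := by
    intro t ht
    have he : HasDerivAt (fun t : ℝ => Real.exp (s * t)) (Real.exp (s * t) * s) t := by
      have h1 : HasDerivAt (fun x : ℝ => s * x) s t := by
        simpa using (hasDerivAt_id t).const_mul s
      exact (Real.hasDerivAt_exp (s * t)).comp t h1
    have := ((hode t ht).mul he : HasDerivAt (fun y => g y * Real.exp (s * y)) _ t)
    have h0 : -s * g t * Real.exp (s * t) + g t * (Real.exp (s * t) * s) = 0 := by ring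
    rw [h0] at this
    exact this
  exact constOn (by fun_prop) hF

/-- explicit formula for the periodic stationary solution for
piecewise-constant rates, and its half-period antisymmetry. -/
theorem stmt10 (T φ0 φ1 : ℝ) (hT : 0 < T) (hφ0 : 0 < φ0) (hφ1 : 0 < φ1)
    (φm φp : ℝ → ℝ)
    (hφmper : ∀ t, φm (t + T) = φm t)
    (hφm0 : ∀ t ∈ Set.Ico (0:ℝ) (T / 2), φm t = φ0)
    (hφm1 : ∀ t ∈ Set.Ico (T / 2) T, φm t = φ1)
    (hφp : ∀ t, φp t = φ0 + φ1 - φm t)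
    (μ : ℝ → ℝ) (hμcont : Continuous μ)
    (hμper : ∀ t, μ (t + T) = μ t)
    -- the ODE holds away from the jump times (multiples of T/2)
    (hμode : ∀ t, (∀ k : ℤ, t ≠ (k : ℝ) * (T / 2)) →
      HasDerivAt μ (-(φm t) * μ t + φp t * (1 - μ t)) t) :
    (∀ t ∈ Set.Ico (0:ℝ) (T / 2),
      μ t = Real.exp (-(φ0 + φ1) * t) / (1 + Real.exp (-(φ0 + φ1) * T / 2)) *
          ((φ0 - φ1) / (φ0 + φ1)) + φ1 / (φ0 + φ1)) ∧
    ∀ t, μ (t + T / 2) = 1 - μ t := by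
  have hs : (0:ℝ) < φ0 + φ1 := by linarith
  have hsne : (φ0 + φ1) ≠ 0 := ne_of_gt hs
  have hper : Function.Periodic φm T := hφmper
  -- floor bounds
  have hfl : ∀ x : ℝ, ((⌊x / T⌋ : ℝ)) * T ≤ x ∧ x < ((⌊x / T⌋ : ℝ) + 1) * T := by
    intro x
    constructor
    · calc (⌊x / T⌋:ℝ) * T ≤ x / T * T := mul_le_mul_of_nonneg_right (Int.floor_le _) hT.le
        _ = x := by field_simp
    · calc x = x / T * T := by field_simp
        _ < ((⌊x / T⌋:ℝ) + 1) * T := mul_lt_mul_of_pos_right (Int.lt_floor_add_one _) hT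
  -- swap property on one period
  have hswap0 : ∀ t ∈ Set.Ico (0:ℝ) T, φm (t + T / 2) = φ0 + φ1 - φm t := by
    intro t ht
    obtain ⟨ht1, ht2⟩ := ht
    rcases lt_or_ge t (T / 2) with h | h
    · rw [hφm0 t ⟨ht1, h⟩, hφm1 (t + T / 2) ⟨by linarith, by linarith⟩]
      ring
    · have h2 : φm (t + T / 2) = φm (t - T / 2) := by
        rw [show t + T / 2 = t - T / 2 + T by ring, hφmper]
      rw [h2, hφm0 (t - T / 2) ⟨by linarith, by linarith⟩, hφm1 t ⟨h, ht2⟩]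
      ring
  -- swap property globally
  have hswap : ∀ t, φm (t + T / 2) = φ0 + φ1 - φm t := by
    intro t
    obtain ⟨hl, hr⟩ := hfl t
    have e1 : φm (t - (⌊t / T⌋ : ℝ) * T) = φm t := hper.sub_int_mul_eq ⌊t / T⌋
    have e2 : φm (t - (⌊t / T⌋ : ℝ) * T + T / 2) = φm (t + T / 2) := by
      have h3 := hper.sub_int_mul_eq (x := t + T / 2) ⌊t / T⌋
      rw [show t + T / 2 - (⌊t / T⌋ : ℝ) * T = t - (⌊t / T⌋:ℝ) * T + T / 2 by ring] at h3
      exact h3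
    rw [← e1, ← e2]
    exact hswap0 _ ⟨by linarith, by linarith⟩
  -- exceptional set lemmas
  have hex1 : ∀ t ∈ Set.Ioo (0:ℝ) (T / 2), ∀ k : ℤ, t ≠ (k:ℝ) * (T / 2) := by
    intro t ht k hk
    rcases le_or_gt k 0 with h | h
    · have hk' : (k:ℝ) ≤ 0 := by exact_mod_cast h
      nlinarith [ht.1, ht.2]
    · have hk' : (1:ℝ) ≤ (k:ℝ) := by exact_mod_cast h
      nlinarith [ht.1, ht.2]
  have hex2 : ∀ t ∈ Set.Ioo (T / 2) T, ∀ k : ℤ, t ≠ (k:ℝ) * (T / 2) := by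
    intro t ht k hk
    rcases le_or_gt k 1 with h | h
    · have hk' : (k:ℝ) ≤ 1 := by exact_mod_cast h
      nlinarith [ht.1, ht.2]
    · have hk' : (2:ℝ) ≤ (k:ℝ) := by exact_mod_cast h
      nlinarith [ht.1, ht.2]
  -- the antisymmetry defect w
  set w : ℝ → ℝ := fun t => μ t + μ (t + T / 2) - 1 with hw
  have hwcont : Continuous w := by
    apply Continuous.sub
    · exact hμcont.add (hμcont.comp (continuous_id.add continuous_const))
    · exact continuous_const
  have hwode : ∀ t, (∀ k : ℤ, t ≠ (k:ℝ) * (T / 2)) →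
      HasDerivAt w (-(φ0 + φ1) * w t) t := by
    intro t ht
    have h1 := hμode t ht
    have ht' : ∀ k : ℤ, t + T / 2 ≠ (k:ℝ) * (T / 2) := by
      intro k hk
      apply ht (k - 1)
      push_cast
      linarith
    have h2 : HasDerivAt (fun u => μ (u + T / 2))
        (-(φm (t + T / 2)) * μ (t + T / 2) + φp (t + T / 2) * (1 - μ (t + T / 2))) t := by
      have := (hμode (t + T / 2) ht').comp t ((hasDerivAt_id t).add_const (T / 2))
      simp only [id, mul_one] at this
      exact this
    have h3 := (h1.add h2).sub_const 1
    have heq : -(φm t) * μ t + φp t * (1 - μ t) +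
        (-(φm (t + T / 2)) * μ (t + T / 2) + φp (t + T / 2) * (1 - μ (t + T / 2)))
        = -(φ0 + φ1) * w t := by
      rw [hφp, hφp, hswap, hw]
      ring
    rw [heq] at h3
    exact h3
  have hH1 := expConst (s := φ0 + φ1) (u := 0) (v := T / 2) hwcont
    (fun t ht => hwode t (hex1 t ht))
  have hH2 := expConst (s := φ0 + φ1) (u := T / 2) (v := T) hwcont
    (fun t ht => hwode t (hex2 t ht))
  have hwT : w T = w 0 := by
    rw [hw]
    simp only
    rw [show (0:ℝ) + T / 2 = T / 2 by ring]
    have e1 := hμper 0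
    rw [show (0:ℝ) + T = T by ring] at e1
    rw [e1]
    have e2 := hμper (T / 2)
    rw [show T + T / 2 = T / 2 + T by ring, e2]
  have hw0 : w 0 = 0 := by
    have e1 := hH1 (T / 2) ⟨by linarith, le_refl _⟩
    have e2 := hH2 T ⟨by linarith, le_refl _⟩
    rw [e1, hwT] at e2
    have hgt : 1 < Real.exp ((φ0 + φ1) * T) := Real.one_lt_exp_iff.mpr (by positivity)
    rw [mul_zero, Real.exp_zero, mul_one] at e2
    nlinarith [e2, hgt]
  have hwhalf : w (T / 2) = 0 := by
    have e1 := hH1 (T / 2) ⟨by linarith, le_refl _⟩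
    rw [hw0, zero_mul] at e1
    have := Real.exp_pos ((φ0 + φ1) * (T / 2))
    nlinarith [e1, this]
  have hwIcc : ∀ t ∈ Set.Icc (0:ℝ) T, w t = 0 := by
    intro t ht
    rcases le_or_gt t (T / 2) with h | h
    · have e := hH1 t ⟨ht.1, h⟩
      rw [hw0, zero_mul] at e
      have := Real.exp_pos ((φ0 + φ1) * t)
      nlinarith [e, this]
    · have e := hH2 t ⟨h.le, ht.2⟩
      rw [hwhalf, zero_mul] at e
      have := Real.exp_pos ((φ0 + φ1) * t)
      nlinarith [e, this]
  have hwper : Function.Periodic w T := by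
    intro t
    rw [hw]
    simp only
    rw [hμper t, show t + T + T / 2 = t + T / 2 + T by ring, hμper (t + T / 2)]
  have hwall : ∀ t, w t = 0 := by
    intro t
    obtain ⟨hl, hr⟩ := hfl t
    have e := hwper.sub_int_mul_eq (x := t) ⌊t / T⌋
    rw [← e]
    exact hwIcc _ ⟨by linarith, by linarith⟩
  have part2 : ∀ t, μ (t + T / 2) = 1 - μ t := by
    intro t
    have := hwall t
    rw [hw] at this
    simp only at this
    linarith
  refine ⟨?_, part2⟩
  -- explicit formula on [0, T/2)
  have hode1 : ∀ t ∈ Set.Ioo (0:ℝ) (T / 2),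
      HasDerivAt (fun u => μ u - φ1 / (φ0 + φ1))
        (-(φ0 + φ1) * (μ t - φ1 / (φ0 + φ1))) t := by
    intro t ht
    have h := (hμode t (hex1 t ht)).sub_const (φ1 / (φ0 + φ1))
    have heq : -(φm t) * μ t + φp t * (1 - μ t)
        = -(φ0 + φ1) * (μ t - φ1 / (φ0 + φ1)) := by
      rw [hφp, hφm0 t ⟨ht.1.le, ht.2⟩]
      field_simp
      ring
    rw [heq] at h
    exact h
  have hF := expConst (g := fun u => μ u - φ1 / (φ0 + φ1)) (s := φ0 + φ1) (u := 0) (v := T / 2)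
    (hμcont.sub continuous_const) hode1
  intro t ht
  have A := hF t ⟨ht.1, ht.2.le⟩
  have B := hF (T / 2) ⟨by linarith, le_refl _⟩
  rw [mul_zero, Real.exp_zero, mul_one] at A B
  have hμT2 : μ (T / 2) = 1 - μ 0 := by
    have := part2 0
    rw [zero_add] at this
    exact this
  rw [hμT2] at B
  rw [show (φ0 + φ1) * (T / 2) = (φ0 + φ1) * T / 2 by ring] at B
  have hX := Real.exp_pos ((φ0 + φ1) * t)
  have hE := Real.exp_pos ((φ0 + φ1) * T / 2)
  have hXne := ne_of_gt hX
  have hEne := ne_of_gt hE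
  rw [show -(φ0 + φ1) * t = -((φ0 + φ1) * t) by ring, Real.exp_neg,
    show -(φ0 + φ1) * T / 2 = -((φ0 + φ1) * T / 2) by ring, Real.exp_neg]
  have hE1ne : Real.exp ((φ0 + φ1) * T / 2) + 1 ≠ 0 := by positivity
  field_simp at A B
  set X := Real.exp ((φ0 + φ1) * t) with hXdef
  set E := Real.exp ((φ0 + φ1) * T / 2) with hEdef
  have hden : (φ0 + φ1) * X * (E + 1) ≠ 0 := by positivity
  have key : μ t = (E * (φ0 - φ1) + φ1 * X * (E + 1)) / ((φ0 + φ1) * X * (E + 1)) := by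
    rw [eq_div_iff hden]
    linear_combination (E + 1) * A - B
  rw [key]
  field_simp
end

section
/- With the step rates φ₋ = φ₀·1_{[0,T/2)} + φ₁·1_{[T/2,T)} and φ₊ = φ₀+φ₁-φ₋, and μ₋ the T-periodic stationary solution, the integral ∫₀ᵀ φ₋(s)μ₋(s)ds equals φ₀φ₁T/(φ₀+φ₁) + ((φ₀-φ₁)/(φ₀+φ₁))²·tanh((φ₀+φ₁)T/4). -/
open Real intervalIntegral MeasureTheory

/-- the mean number of transitions per period for the
piecewise-constant rates model. -/
theorem stmt11 (T φ0 φ1 : ℝ) (hT : 0 < T) (hφ0 : 0 < φ0) (hφ1 : 0 < φ1)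
    (φm : ℝ → ℝ)
    (hφmper : ∀ t, φm (t + T) = φm t)
    (hφm0 : ∀ t ∈ Set.Ico (0:ℝ) (T / 2), φm t = φ0)
    (hφm1 : ∀ t ∈ Set.Ico (T / 2) T, φm t = φ1)
    (μ : ℝ → ℝ)
    (hμ : ∀ t ∈ Set.Ico (0:ℝ) (T / 2),
      μ t = Real.exp (-(φ0 + φ1) * t) / (1 + Real.exp (-(φ0 + φ1) * T / 2)) *
          ((φ0 - φ1) / (φ0 + φ1)) + φ1 / (φ0 + φ1))
    (hμhalf : ∀ t, μ (t + T / 2) = 1 - μ t) :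
    (∫ s in (0:ℝ)..T, φm s * μ s) =
      φ0 * φ1 * T / (φ0 + φ1) +
        ((φ0 - φ1) / (φ0 + φ1)) ^ 2 * Real.tanh ((φ0 + φ1) * T / 4) := by
  set c : ℝ := φ0 + φ1 with hc
  have hcpos : 0 < c := by positivity
  have hc0 : c ≠ 0 := hcpos.ne'
  set D : ℝ := 1 + Real.exp (-c * T / 2) with hD
  have hDpos : 0 < D := by positivity
  set E : ℝ → ℝ := fun s => Real.exp (-c * s) / D * ((φ0 - φ1) / c) + φ1 / c with hE
  clear_value c D E
  have hhalf : 0 < T / 2 := by linarith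
  -- a.e. inequality s ≠ T/2
  have hne : ∀ᵐ s : ℝ, s ≠ T / 2 := by
    rw [ae_iff]
    simp only [not_not]
    simp only [Set.setOf_eq_eq_singleton]
    exact measure_singleton _
  have hmem : ∀ s ∈ Set.Ioc (0:ℝ) (T/2), s ≠ T/2 → s ∈ Set.Ico (0:ℝ) (T/2) := by
    intro s hs hne'
    exact ⟨hs.1.le, lt_of_le_of_ne hs.2 hne'⟩
  -- first piece
  have h1 : (∫ s in (0:ℝ)..(T/2), φm s * μ s) = ∫ s in (0:ℝ)..(T/2), φ0 * E s := by
    apply intervalIntegral.integral_congr_ae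
    filter_upwards [hne] with s hs hsm
    rw [Set.uIoc_of_le hhalf.le] at hsm
    have hico := hmem s hsm hs
    rw [hφm0 s hico, hμ s hico]; simp only [hE]
  -- second piece
  have h2 : (∫ s in (T/2)..T, φm s * μ s) = ∫ s in (0:ℝ)..(T/2), φ1 * (1 - E s) := by
    have := intervalIntegral.integral_comp_add_right (a := (0:ℝ)) (b := T/2)
      (fun s => φm s * μ s) (T/2)
    rw [zero_add] at this
    have hTT : T / 2 + T / 2 = T := by ring
    rw [hTT] at this
    rw [← this]
    apply intervalIntegral.integral_congr_ae
    filter_upwards [hne] with s hs hsm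
    rw [Set.uIoc_of_le hhalf.le] at hsm
    have hico := hmem s hsm hs
    have h1' : s + T/2 ∈ Set.Ico (T/2) T := ⟨by linarith [hico.1], by linarith [hico.2]⟩
    rw [hφm1 _ h1', hμhalf s, hμ s hico]; simp only [hE]
  -- continuity of E
  have hEcont : Continuous E := by
    rw [hE]
    apply Continuous.add
    · exact (((Real.continuous_exp.comp (continuous_const.mul continuous_id)).div_const D).mul
        continuous_const)
    · exact continuous_const
  -- integrability of φm * μ on each piece
  have hint1 : IntervalIntegrable (fun s => φm s * μ s) volume 0 (T/2) := by
    apply IntervalIntegrable.congr_ae (f := fun s => φ0 * E s)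
    · exact ((hEcont.const_smul φ0).intervalIntegrable 0 (T/2))
    · filter_upwards [ae_restrict_mem measurableSet_uIoc, ae_restrict_of_ae hne]
        with s hsm hs
      rw [Set.uIoc_of_le hhalf.le] at hsm
      have hico := hmem s hsm hs
      rw [hφm0 s hico, hμ s hico]; simp only [hE]
  have hint2 : IntervalIntegrable (fun s => φm s * μ s) volume (T/2) T := by
    apply IntervalIntegrable.congr_ae (f := fun s => φ1 * (1 - E (s - T/2)))
    · exact (((continuous_const.sub (hEcont.comp (continuous_id.sub continuous_const))).const_smul
        φ1).intervalIntegrable (T/2) T)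
    · have hne2 : ∀ᵐ s : ℝ, s ≠ T := by
        rw [ae_iff]; simp only [not_not]
        simp only [Set.setOf_eq_eq_singleton]
        exact measure_singleton _
      filter_upwards [ae_restrict_mem measurableSet_uIoc, ae_restrict_of_ae hne2]
        with s hsm hs
      rw [Set.uIoc_of_le (by linarith : T/2 ≤ T)] at hsm
      have hico : s - T/2 ∈ Set.Ico (0:ℝ) (T/2) :=
        ⟨by linarith [hsm.1], by
          rcases lt_of_le_of_ne hsm.2 hs with h; linarith⟩
      have h1' : s ∈ Set.Ico (T/2) T := ⟨by linarith [hico.1], by linarith [hico.2]⟩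
      have := hμhalf (s - T/2)
      rw [sub_add_cancel] at this
      rw [hφm1 _ h1', this, hμ _ hico]; simp only [hE]
  have hsplit : (∫ s in (0:ℝ)..T, φm s * μ s)
      = (∫ s in (0:ℝ)..(T/2), φm s * μ s) + ∫ s in (T/2)..T, φm s * μ s :=
    (intervalIntegral.integral_add_adjacent_intervals hint1 hint2).symm
  rw [hsplit, h1, h2]
  -- compute the exponential integral
  have hexp : (∫ s in (0:ℝ)..(T/2), Real.exp (-c * s))
      = (1 - Real.exp (-c * T / 2)) / c := by
    rw [intervalIntegral.integral_comp_mul_left Real.exp (neg_ne_zero.mpr hc0),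
      integral_exp, smul_eq_mul, mul_zero, Real.exp_zero]
    have h' : -c * (T / 2) = -c * T / 2 := by ring
    rw [h', eq_div_iff hc0, inv_neg]
    have h2' : -c⁻¹ * (Real.exp (-c * T / 2) - 1) * c
        = (1 - Real.exp (-c * T / 2)) * (c⁻¹ * c) := by ring
    rw [h2', inv_mul_cancel₀ hc0, mul_one]
  set J : ℝ := ((1 - Real.exp (-c * T / 2)) / c) / D * ((φ0 - φ1) / c) + φ1 / c * (T/2)
    with hJdef
  have hJ : (∫ s in (0:ℝ)..(T/2), E s) = J := by
    simp only [hE]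
    rw [intervalIntegral.integral_add
      (((by fun_prop : Continuous fun s : ℝ => Real.exp (-c * s) / D * ((φ0 - φ1) / c)))
        |>.intervalIntegrable _ _) intervalIntegrable_const]
    rw [intervalIntegral.integral_const, smul_eq_mul, hJdef]
    congr 1
    · rw [intervalIntegral.integral_mul_const, intervalIntegral.integral_div, hexp]
    · rw [sub_zero, mul_comm]
  have hK : ∀ k : ℝ, (∫ s in (0:ℝ)..(T/2), k * E s) = k * J := by
    intro k
    rw [intervalIntegral.integral_const_mul, hJ]
  have hI2 : (∫ s in (0:ℝ)..(T/2), φ1 * (1 - E s)) = φ1 * (T/2) - φ1 * J := by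
    have hfun : (fun s => φ1 * (1 - E s)) = fun s => φ1 - φ1 * E s := by
      funext s; ring
    rw [hfun, intervalIntegral.integral_sub (g := fun s => φ1 * E s) intervalIntegrable_const
      ((continuous_const.mul hEcont).intervalIntegrable _ _),
      intervalIntegral.integral_const_mul, hJ, intervalIntegral.integral_const,
      smul_eq_mul, sub_zero, mul_comm]
  rw [hK φ0, hI2, hJdef]
  -- final algebra
  have htanh : Real.tanh (c * T / 4)
      = (1 - Real.exp (-c * T / 2)) / (1 + Real.exp (-c * T / 2)) := by
    rw [Real.tanh_eq_sinh_div_cosh, Real.sinh_eq, Real.cosh_eq]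
    have he : Real.exp (-c * T / 2) = Real.exp (-(c * T / 4)) * Real.exp (-(c * T / 4)) := by
      rw [← Real.exp_add]; ring_nf
    rw [he, Real.exp_neg]
    have hp : Real.exp (c * T / 4) ≠ 0 := Real.exp_ne_zero _
    field_simp
  rw [htanh, hD]
  have hexp_ne : (1 : ℝ) + Real.exp (-c * T / 2) ≠ 0 := by positivity
  rw [hc]
  field_simp
  ring
end
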